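/- Suppose there exists a matrix-valued function H : ℂ → M_N(ℂ) with entries analytic at k₁ such that Γ(k)·R(k) = H(k) for all k ≠ k₁ in some punctured neighborhood of k₁, where R(k) = I + Σ_{l=1}^n Σ_{j=1}^l (k−k₁)^{-(n+1−l)} · p_{l+1−j} q_j^T. If q_1 ≠ 0, then for every m = 1,…,n: Γ(k₁)·p_m + (1/1!)·Γ'(k₁)·p_{m−1} + (1/2!)·Γ''(k₁)·p_{m−2} + … + (1/(m−1)!)·Γ^{(m−1)}(k₁)·p_1 = 0, where Γ^{(i)} denotes the i-th entrywise complex derivative. -/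

import Mathlib

open scoped BigOperators Matrix
open Topology Filter

private lemma itdw_eq_itd {s : Set ℂ} (hs : IsOpen s) {x : ℂ} (hx : x ∈ s)
    (f : ℂ → ℂ) (n : ℕ) : iteratedDerivWithin n f s x = iteratedDeriv n f x := by
  rw [iteratedDerivWithin_eq_iteratedFDerivWithin, iteratedDeriv_eq_iteratedFDeriv,
    iteratedFDerivWithin_of_isOpen n hs hx]

private lemma itd_add {f g : ℂ → ℂ} {x : ℂ} (hf : AnalyticAt ℂ f x)
    (hg : AnalyticAt ℂ g x) (n : ℕ) :
    iteratedDeriv n (fun k => f k + g k) x = iteratedDeriv n f x + iteratedDeriv n g x := by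
  obtain ⟨u, hu, hfu⟩ := hf.exists_mem_nhds_analyticOnNhd
  obtain ⟨v, hv, hgv⟩ := hg.exists_mem_nhds_analyticOnNhd
  obtain ⟨t, hts, hto, hxt⟩ := mem_nhds_iff.mp (Filter.inter_mem hu hv)
  have h1 : ContDiffOn ℂ n f t :=
    (hfu.mono fun y hy => (hts hy).1).contDiffOn hto.uniqueDiffOn
  have h2 : ContDiffOn ℂ n g t :=
    (hgv.mono fun y hy => (hts hy).2).contDiffOn hto.uniqueDiffOn
  rw [← itdw_eq_itd hto hxt _ n, ← itdw_eq_itd hto hxt f n, ← itdw_eq_itd hto hxt g n]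
  exact iteratedDerivWithin_add hxt hto.uniqueDiffOn (h1 x hxt) (h2 x hxt)

private lemma itd_cmul {f : ℂ → ℂ} {x : ℂ} (hf : AnalyticAt ℂ f x) (c : ℂ) (n : ℕ) :
    iteratedDeriv n (fun k => c * f k) x = c * iteratedDeriv n f x := by
  obtain ⟨u, hu, hfu⟩ := hf.exists_mem_nhds_analyticOnNhd
  obtain ⟨t, hts, hto, hxt⟩ := mem_nhds_iff.mp hu
  have h1 : ContDiffOn ℂ n f t := (hfu.mono hts).contDiffOn hto.uniqueDiffOn
  rw [← itdw_eq_itd hto hxt _ n, ← itdw_eq_itd hto hxt f n]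
  exact iteratedDerivWithin_const_mul hxt hto.uniqueDiffOn c (h1 x hxt)

private lemma itd_zero_fun (n : ℕ) (x : ℂ) : iteratedDeriv n (fun _ : ℂ => (0 : ℂ)) x = 0 := by
  induction n generalizing x with
  | zero => simp
  | succ n ih =>
    rw [iteratedDeriv_succ']
    simpa using ih x

private lemma itd_sum {ι : Type*} (t : Finset ι) (f : ι → ℂ → ℂ) {x : ℂ}
    (hf : ∀ i ∈ t, AnalyticAt ℂ (f i) x) (n : ℕ) :
    iteratedDeriv n (fun k => ∑ i ∈ t, f i k) x = ∑ i ∈ t, iteratedDeriv n (f i) x := by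
  induction t using Finset.cons_induction with
  | empty => simpa using itd_zero_fun n x
  | cons a s ha ih =>
    have hs : ∀ i ∈ s, AnalyticAt ℂ (f i) x := fun i hi => hf i (Finset.mem_cons_of_mem hi)
    simp only [Finset.sum_cons]
    rw [itd_add (hf a (Finset.mem_cons_self a s)) (s.analyticAt_fun_sum hs) n, ih hs]

private lemma itd_pow_mul (k₁ : ℂ) :
    ∀ (s j : ℕ) (g : ℂ → ℂ), AnalyticAt ℂ g k₁ →
    iteratedDeriv s (fun k => (k - k₁) ^ j * g k) k₁ =
      if j ≤ s then ((s.choose j : ℂ) * (j.factorial : ℂ)) * iteratedDeriv (s - j) g k₁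
      else 0 := by
  intro s
  induction s with
  | zero =>
    intro j g hg
    match j with
    | 0 => simp
    | j + 1 => simp [Nat.not_succ_le_zero]
  | succ s ih =>
    intro j g hg
    have hg' : AnalyticAt ℂ (deriv g) k₁ := by
      obtain ⟨u, hu, h⟩ := hg.exists_mem_nhds_analyticOnNhd
      exact h.deriv k₁ (mem_of_mem_nhds hu)
    match j with
    | 0 =>
      simp only [pow_zero, one_mul, Nat.choose_zero_right, Nat.factorial_zero, Nat.cast_one,
        Nat.zero_le, if_true, Nat.sub_zero]
    | j + 1 =>
      rw [iteratedDeriv_succ']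
      have hd : deriv (fun k => (k - k₁) ^ (j + 1) * g k) =ᶠ[𝓝 k₁]
          fun k => ((j : ℂ) + 1) * ((k - k₁) ^ j * g k) + (k - k₁) ^ (j + 1) * deriv g k := by
        filter_upwards [hg.eventually_analyticAt] with y hy
        have h1 : HasDerivAt (fun k : ℂ => (k - k₁) ^ (j + 1))
            (((j : ℂ) + 1) * (y - k₁) ^ j) y := by
          simpa using ((hasDerivAt_id y).sub_const k₁).fun_pow (j + 1)
        have h2 := h1.fun_mul hy.differentiableAt.hasDerivAt
        rw [h2.deriv]; push_cast; ring
      rw [hd.iteratedDeriv_eq s]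
      have hp : AnalyticAt ℂ (fun k : ℂ => (k - k₁) ^ j * g k) k₁ :=
        ((analyticAt_id.sub analyticAt_const).pow j).mul hg
      have ha1 : AnalyticAt ℂ (fun k : ℂ => ((j : ℂ) + 1) * ((k - k₁) ^ j * g k)) k₁ :=
        analyticAt_const.mul hp
      have ha2 : AnalyticAt ℂ (fun k : ℂ => (k - k₁) ^ (j + 1) * deriv g k) k₁ :=
        ((analyticAt_id.sub analyticAt_const).pow (j + 1)).mul hg'
      rw [itd_add ha1 ha2 s, itd_cmul hp _ s, ih j g hg, ih (j + 1) (deriv g) hg']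
      by_cases hjs : j ≤ s
      · rw [if_pos hjs, if_pos (by omega : j + 1 ≤ s + 1)]
        by_cases hjs' : j + 1 ≤ s
        · rw [if_pos hjs']
          have he : iteratedDeriv (s - (j + 1)) (deriv g) k₁ = iteratedDeriv (s - j) g k₁ := by
            rw [← iteratedDeriv_succ']
            congr 1
            omega
          rw [he]
          have hc : ((s + 1).choose (j + 1) : ℂ) = (s.choose j : ℂ) + (s.choose (j + 1) : ℂ) := by
            exact_mod_cast congrArg (Nat.cast : ℕ → ℂ) (Nat.choose_succ_succ s j)
          have hs1 : (s + 1 - (j + 1)) = s - j := by omega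
          rw [hs1, hc]
          have hf : ((j + 1).factorial : ℂ) = ((j : ℂ) + 1) * (j.factorial : ℂ) := by
            push_cast [Nat.factorial_succ]; ring
          rw [hf]; ring
        · have hje : j = s := by omega
          subst hje
          rw [if_neg hjs']
          simp only [Nat.choose_self, Nat.cast_one, Nat.sub_self]
          have hf : ((j + 1).factorial : ℂ) = ((j : ℂ) + 1) * (j.factorial : ℂ) := by
            push_cast [Nat.factorial_succ]; ring
          rw [hf]; ring
      · rw [if_neg hjs, if_neg (by omega : ¬ j + 1 ≤ s + 1), if_neg (by omega : ¬ j + 1 ≤ s)]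
        ring

private lemma mul_vecMulVec' {N : ℕ} (M : Matrix (Fin N) (Fin N) ℂ) (u v : Fin N → ℂ) :
    M * Matrix.vecMulVec u v = Matrix.vecMulVec (M *ᵥ u) v := by
  ext a b
  simp [Matrix.mul_apply, Matrix.vecMulVec_apply, Matrix.mulVec, dotProduct,
    Finset.sum_mul, mul_assoc]

private lemma smul_vecMulVec' {N : ℕ} (c : ℂ) (u v : Fin N → ℂ) :
    c • Matrix.vecMulVec u v = Matrix.vecMulVec (c • u) v := by
  ext a b; simp [Matrix.vecMulVec_apply, mul_assoc]

private lemma sum_vecMulVec' {N : ℕ} {ι : Type*} (t : Finset ι) (u : ι → Fin N → ℂ)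
    (v : Fin N → ℂ) :
    ∑ i ∈ t, Matrix.vecMulVec (u i) v = Matrix.vecMulVec (∑ i ∈ t, u i) v := by
  ext a b; simp [Matrix.vecMulVec_apply, Matrix.sum_apply, Finset.sum_apply, Finset.sum_mul]

private lemma triangle_swap {M : Type*} [AddCommMonoid M] (m : ℕ) (f : ℕ → ℕ → M) :
    ∑ l ∈ Finset.Icc 1 m, ∑ j ∈ Finset.Icc 1 l, f l j
      = ∑ j ∈ Finset.Icc 1 m, ∑ l ∈ Finset.Icc j m, f l j := by
  rw [Finset.sum_sigma', Finset.sum_sigma']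
  refine Finset.sum_nbij' (fun x => ⟨x.2, x.1⟩) (fun x => ⟨x.2, x.1⟩) ?_ ?_ ?_ ?_ ?_
  · intro x hx; simp only [Finset.mem_sigma, Finset.mem_Icc] at hx ⊢; omega
  · intro x hx; simp only [Finset.mem_sigma, Finset.mem_Icc] at hx ⊢; omega
  · intro x hx; rfl
  · intro x hx; rfl
  · intro x hx; rfl

/-- If `Γ(k)·R(k)` extends analytically across `k₁`, where
`R(k) = I + Σ_{l=1}^n Σ_{j=1}^l (k−k₁)^{−(n+1−l)} p_{l+1−j} q_jᵀ`, and `q_1 ≠ 0`,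
then for every `m = 1,…,n`:
`Σ_{i=0}^{m−1} (1/i!) Γ^{(i)}(k₁) p_{m−i} = 0`. -/
theorem stacked_kernel_equations (N n : ℕ) (hN : 1 ≤ N) (hn : 1 ≤ n)
    (k₁ : ℂ)
    (Γ : ℂ → Matrix (Fin N) (Fin N) ℂ)
    (hΓ : ∀ a b, AnalyticAt ℂ (fun k => Γ k a b) k₁)
    (p q : ℕ → Fin N → ℂ)
    (H : ℂ → Matrix (Fin N) (Fin N) ℂ)
    (hH : ∀ a b, AnalyticAt ℂ (fun k => H k a b) k₁)
    (hGR : ∀ᶠ k in nhdsWithin k₁ {k₁}ᶜ,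
      Γ k * (1 + ∑ l ∈ Finset.Icc 1 n, ∑ j ∈ Finset.Icc 1 l,
        ((k - k₁) ^ (n + 1 - l))⁻¹ • Matrix.vecMulVec (p (l + 1 - j)) (q j)) = H k)
    (hq : q 1 ≠ 0) :
    ∀ m ∈ Finset.Icc 1 n,
      ∑ i ∈ Finset.range m, ((Nat.factorial i : ℂ))⁻¹ •
        ((Matrix.of fun a b => iteratedDeriv i (fun k => Γ k a b) k₁) *ᵥ p (m - i))
      = 0 := by
  set A : ℕ → Matrix (Fin N) (Fin N) ℂ :=
    fun l => ∑ j ∈ Finset.Icc 1 l, Matrix.vecMulVec (p (l + 1 - j)) (q j) with hA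
  set D : ℕ → Matrix (Fin N) (Fin N) ℂ :=
    fun i => Matrix.of fun a b => iteratedDeriv i (fun k => Γ k a b) k₁ with hD
  have hXan : AnalyticAt ℂ (fun k : ℂ => k - k₁) k₁ := analyticAt_id.sub analyticAt_const
  have hφ : ∀ (l : ℕ) (a b : Fin N), AnalyticAt ℂ (fun k => (Γ k * A l) a b) k₁ := by
    intro l a b
    have hfn : (fun k => (Γ k * A l) a b) = fun k => ∑ c, Γ k a c * A l c b := by
      funext k; simp [Matrix.mul_apply]
    rw [hfn]
    exact Finset.analyticAt_fun_sum _ fun c _ => (hΓ a c).mul analyticAt_const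
  -- Step 1: punctured-neighborhood identity, entrywise
  have hE : ∀ᶠ k in nhdsWithin k₁ {k₁}ᶜ, ∀ a b : Fin N,
      (k - k₁) ^ n * Γ k a b + ∑ l ∈ Finset.Icc 1 n, (k - k₁) ^ (l - 1) * (Γ k * A l) a b
        = (k - k₁) ^ n * H k a b := by
    filter_upwards [hGR, self_mem_nhdsWithin] with k hk hk1 a b
    have hx : k - k₁ ≠ 0 := sub_ne_zero.mpr hk1
    have hsm : (k - k₁) ^ n • (1 + ∑ l ∈ Finset.Icc 1 n, ∑ j ∈ Finset.Icc 1 l,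
        ((k - k₁) ^ (n + 1 - l))⁻¹ • Matrix.vecMulVec (p (l + 1 - j)) (q j))
        = (k - k₁) ^ n • (1 : Matrix (Fin N) (Fin N) ℂ)
          + ∑ l ∈ Finset.Icc 1 n, (k - k₁) ^ (l - 1) • A l := by
      rw [smul_add, Finset.smul_sum]
      congr 1
      refine Finset.sum_congr rfl fun l hl => ?_
      have hl' := Finset.mem_Icc.mp hl
      have hpow : (k - k₁) ^ n * ((k - k₁) ^ (n + 1 - l))⁻¹ = (k - k₁) ^ (l - 1) := by
        rw [← pow_sub₀ _ hx (by omega : n + 1 - l ≤ n)]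
        congr 1
        omega
      rw [hA, Finset.smul_sum, Finset.smul_sum]
      refine Finset.sum_congr rfl fun j hj => ?_
      rw [smul_smul, hpow]
    have key2 : (k - k₁) ^ n • Γ k + ∑ l ∈ Finset.Icc 1 n, (k - k₁) ^ (l - 1) • (Γ k * A l)
        = (k - k₁) ^ n • H k := by
      calc (k - k₁) ^ n • Γ k + ∑ l ∈ Finset.Icc 1 n, (k - k₁) ^ (l - 1) • (Γ k * A l)
          = Γ k * ((k - k₁) ^ n • (1 : Matrix (Fin N) (Fin N) ℂ)
              + ∑ l ∈ Finset.Icc 1 n, (k - k₁) ^ (l - 1) • A l) := by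
            rw [Matrix.mul_add, Matrix.mul_smul, Matrix.mul_one, Matrix.mul_sum]
            simp only [Matrix.mul_smul]
        _ = Γ k * ((k - k₁) ^ n • (1 + ∑ l ∈ Finset.Icc 1 n, ∑ j ∈ Finset.Icc 1 l,
              ((k - k₁) ^ (n + 1 - l))⁻¹ • Matrix.vecMulVec (p (l + 1 - j)) (q j))) := by
            rw [hsm]
        _ = (k - k₁) ^ n • (Γ k * (1 + ∑ l ∈ Finset.Icc 1 n, ∑ j ∈ Finset.Icc 1 l,
              ((k - k₁) ^ (n + 1 - l))⁻¹ • Matrix.vecMulVec (p (l + 1 - j)) (q j))) := by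
            rw [Matrix.mul_smul]
        _ = (k - k₁) ^ n • H k := by rw [hk]
    have := congrFun (congrFun key2 a) b
    simpa [Matrix.add_apply, Matrix.smul_apply, Matrix.sum_apply, smul_eq_mul] using this
  -- Step 2: eventual equality on a full neighborhood, entrywise
  have hFan : ∀ a b : Fin N, AnalyticAt ℂ (fun k => (k - k₁) ^ n * Γ k a b
      + ∑ l ∈ Finset.Icc 1 n, (k - k₁) ^ (l - 1) * (Γ k * A l) a b) k₁ := fun a b =>
    ((hXan.pow n).mul (hΓ a b)).add
      (Finset.analyticAt_fun_sum _ fun l _ => (hXan.pow (l - 1)).mul (hφ l a b))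
  have hGan : ∀ a b : Fin N, AnalyticAt ℂ (fun k => (k - k₁) ^ n * H k a b) k₁ :=
    fun a b => (hXan.pow n).mul (hH a b)
  have hEE : ∀ a b : Fin N, (fun k => (k - k₁) ^ n * Γ k a b
      + ∑ l ∈ Finset.Icc 1 n, (k - k₁) ^ (l - 1) * (Γ k * A l) a b)
      =ᶠ[𝓝 k₁] (fun k => (k - k₁) ^ n * H k a b) := by
    intro a b
    refine ((hFan a b).frequently_eq_iff_eventually_eq (hGan a b)).mp ?_
    exact (hE.mono fun k hk => hk a b).frequently
  -- iterated derivatives of entries of Γ · A l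
  have hDA : ∀ (i l : ℕ) (a b : Fin N),
      iteratedDeriv i (fun k => (Γ k * A l) a b) k₁ = (D i * A l) a b := by
    intro i l a b
    have h1 : (fun k => (Γ k * A l) a b) = fun k => ∑ c, A l c b * Γ k a c := by
      funext k; simp [Matrix.mul_apply, mul_comm]
    rw [h1, itd_sum Finset.univ _ (fun c _ => analyticAt_const.fun_mul (hΓ a c)) i,
      Matrix.mul_apply]
    refine Finset.sum_congr rfl fun c _ => ?_
    rw [itd_cmul (hΓ a c) (A l c b) i]
    simp [hD, mul_comm]
  -- Step 3: matrix equations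
  have hM : ∀ m ∈ Finset.Icc 1 n,
      ∑ l ∈ Finset.Icc 1 m,
        (((m - 1).choose (l - 1) : ℂ) * (((l - 1).factorial : ℂ))) • (D (m - l) * A l)
        = 0 := by
    intro m hm
    obtain ⟨hm1, hmn⟩ := Finset.mem_Icc.mp hm
    ext a b
    have h0 := (hEE a b).iteratedDeriv_eq (m - 1)
    rw [itd_pow_mul k₁ (m - 1) n _ (hH a b), if_neg (by omega : ¬ n ≤ m - 1)] at h0
    rw [itd_add ((hXan.fun_pow n).fun_mul (hΓ a b))
      (Finset.analyticAt_fun_sum _ fun l _ => (hXan.fun_pow (l - 1)).fun_mul (hφ l a b)) (m - 1)] at h0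
    rw [itd_pow_mul k₁ (m - 1) n _ (hΓ a b), if_neg (by omega : ¬ n ≤ m - 1), zero_add] at h0
    rw [itd_sum _ _ (fun l _ => (hXan.fun_pow (l - 1)).fun_mul (hφ l a b)) (m - 1)] at h0
    have h1 : ∀ l ∈ Finset.Icc 1 n,
        iteratedDeriv (m - 1) (fun k => (k - k₁) ^ (l - 1) * (Γ k * A l) a b) k₁
          = if l - 1 ≤ m - 1 then
              (((m - 1).choose (l - 1) : ℂ) * (((l - 1).factorial : ℂ)))
                * (D (m - 1 - (l - 1)) * A l) a b
            else 0 := by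
      intro l hl
      rw [itd_pow_mul k₁ (m - 1) (l - 1) _ (hφ l a b), hDA]
    rw [Finset.sum_congr rfl h1] at h0
    rw [← Finset.sum_subset (Finset.Icc_subset_Icc_right hmn)
      (fun x hx hx' => by
        rw [if_neg]
        simp only [Finset.mem_Icc] at hx hx'
        omega)] at h0
    have h2 : ∑ l ∈ Finset.Icc 1 m,
        (if l - 1 ≤ m - 1 then
          (((m - 1).choose (l - 1) : ℂ) * (((l - 1).factorial : ℂ)))
            * (D (m - 1 - (l - 1)) * A l) a b
        else 0)
        = ∑ l ∈ Finset.Icc 1 m,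
          (((m - 1).choose (l - 1) : ℂ) * (((l - 1).factorial : ℂ))) * (D (m - l) * A l) a b := by
      refine Finset.sum_congr rfl fun l hl => ?_
      obtain ⟨hl1, hlm⟩ := Finset.mem_Icc.mp hl
      rw [if_pos (by omega), show m - 1 - (l - 1) = m - l by omega]
    rw [h2] at h0
    simpa [Matrix.sum_apply, Matrix.smul_apply, smul_eq_mul] using h0
  -- Step 4: divide by (m-1)!
  have hT : ∀ m ∈ Finset.Icc 1 n,
      ∑ l ∈ Finset.Icc 1 m, (((m - l).factorial : ℂ))⁻¹ • (D (m - l) * A l) = 0 := by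
    intro m hm
    obtain ⟨hm1, hmn⟩ := Finset.mem_Icc.mp hm
    have heq : ∑ l ∈ Finset.Icc 1 m, (((m - l).factorial : ℂ))⁻¹ • (D (m - l) * A l)
        = (((m - 1).factorial : ℂ))⁻¹ • ∑ l ∈ Finset.Icc 1 m,
            (((m - 1).choose (l - 1) : ℂ) * (((l - 1).factorial : ℂ))) • (D (m - l) * A l) := by
      rw [Finset.smul_sum]
      refine Finset.sum_congr rfl fun l hl => ?_
      obtain ⟨hl1, hlm⟩ := Finset.mem_Icc.mp hl
      rw [smul_smul]
      congr 1
      have hnat : (m - 1).choose (l - 1) * (l - 1).factorial * (m - l).factorial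
          = (m - 1).factorial := by
        have h := Nat.choose_mul_factorial_mul_factorial (n := m - 1) (k := l - 1)
          (by omega : l - 1 ≤ m - 1)
        rwa [show m - 1 - (l - 1) = m - l by omega] at h
      have hc : ((m - 1).choose (l - 1) : ℂ) * ((l - 1).factorial : ℂ) * ((m - l).factorial : ℂ)
          = ((m - 1).factorial : ℂ) := by exact_mod_cast congrArg (Nat.cast : ℕ → ℂ) hnat
      have h1 : ((m - l).factorial : ℂ) ≠ 0 := Nat.cast_ne_zero.mpr (Nat.factorial_ne_zero _)
      have h2 : ((m - 1).factorial : ℂ) ≠ 0 := Nat.cast_ne_zero.mpr (Nat.factorial_ne_zero _)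
      field_simp
      linear_combination -hc
    rw [heq, hM m hm, smul_zero]
  -- Step 5: vector equations
  have hv : ∀ m ∈ Finset.Icc 1 n, ∀ j ∈ Finset.Icc 1 m,
      ∑ l ∈ Finset.Icc j m, (((m - l).factorial : ℂ))⁻¹ • (D (m - l) *ᵥ p (l + 1 - j))
        = ∑ i ∈ Finset.range (m + 1 - j),
            ((i.factorial : ℂ))⁻¹ • (D i *ᵥ p (m + 1 - j - i)) := by
    intro m hm j hj
    obtain ⟨hj1, hjm⟩ := Finset.mem_Icc.mp hj
    refine Finset.sum_nbij' (fun l => m - l) (fun i => m - i) ?_ ?_ ?_ ?_ ?_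
    · intro l hl
      simp only [Finset.mem_Icc] at hl
      simp only [Finset.mem_range]
      omega
    · intro i hi
      simp only [Finset.mem_range] at hi
      simp only [Finset.mem_Icc]
      omega
    · intro l hl
      simp only [Finset.mem_Icc] at hl
      show m - (m - l) = l
      omega
    · intro i hi
      simp only [Finset.mem_range] at hi
      show m - (m - i) = i
      omega
    · intro l hl
      simp only [Finset.mem_Icc] at hl
      rw [show m + 1 - j - (m - l) = l + 1 - j by omega]
  have hVec : ∀ m ∈ Finset.Icc 1 n,
      ∑ j ∈ Finset.Icc 1 m, Matrix.vecMulVec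
        (∑ i ∈ Finset.range (m + 1 - j), ((i.factorial : ℂ))⁻¹ • (D i *ᵥ p (m + 1 - j - i)))
        (q j) = 0 := by
    intro m hm
    have e1 : ∑ l ∈ Finset.Icc 1 m, (((m - l).factorial : ℂ))⁻¹ • (D (m - l) * A l)
        = ∑ l ∈ Finset.Icc 1 m, ∑ j ∈ Finset.Icc 1 l, Matrix.vecMulVec
            ((((m - l).factorial : ℂ))⁻¹ • (D (m - l) *ᵥ p (l + 1 - j))) (q j) := by
      refine Finset.sum_congr rfl fun l hl => ?_
      rw [hA, Matrix.mul_sum, Finset.smul_sum]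
      refine Finset.sum_congr rfl fun j hj => ?_
      rw [mul_vecMulVec', smul_vecMulVec']
    calc ∑ j ∈ Finset.Icc 1 m, Matrix.vecMulVec
          (∑ i ∈ Finset.range (m + 1 - j),
            ((i.factorial : ℂ))⁻¹ • (D i *ᵥ p (m + 1 - j - i))) (q j)
        = ∑ j ∈ Finset.Icc 1 m, ∑ l ∈ Finset.Icc j m, Matrix.vecMulVec
            ((((m - l).factorial : ℂ))⁻¹ • (D (m - l) *ᵥ p (l + 1 - j))) (q j) := by
          refine Finset.sum_congr rfl fun j hj => ?_
          rw [sum_vecMulVec', hv m hm j hj]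
      _ = ∑ l ∈ Finset.Icc 1 m, ∑ j ∈ Finset.Icc 1 l, Matrix.vecMulVec
            ((((m - l).factorial : ℂ))⁻¹ • (D (m - l) *ᵥ p (l + 1 - j))) (q j) :=
          (triangle_swap m _).symm
      _ = ∑ l ∈ Finset.Icc 1 m, (((m - l).factorial : ℂ))⁻¹ • (D (m - l) * A l) := e1.symm
      _ = 0 := hT m hm
  -- Step 6: strong induction
  show ∀ m ∈ Finset.Icc 1 n,
      ∑ i ∈ Finset.range m, ((Nat.factorial i : ℂ))⁻¹ • (D i *ᵥ p (m - i)) = 0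
  intro m
  induction m using Nat.strong_induction_on with
  | _ m IH =>
    intro hm
    obtain ⟨hm1, hmn⟩ := Finset.mem_Icc.mp hm
    have h := hVec m hm
    have hins : Finset.Icc 1 m = insert 1 (Finset.Icc 2 m) := by
      ext x; simp only [Finset.mem_Icc, Finset.mem_insert]; omega
    have hnotmem : (1 : ℕ) ∉ Finset.Icc 2 m := by simp
    rw [hins, Finset.sum_insert hnotmem] at h
    have hz : ∑ j ∈ Finset.Icc 2 m, Matrix.vecMulVec
        (∑ i ∈ Finset.range (m + 1 - j),
          ((i.factorial : ℂ))⁻¹ • (D i *ᵥ p (m + 1 - j - i))) (q j) = 0 := by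
      refine Finset.sum_eq_zero fun j hj => ?_
      obtain ⟨hj2, hjm⟩ := Finset.mem_Icc.mp hj
      have hv0 : ∑ i ∈ Finset.range (m + 1 - j),
          ((i.factorial : ℂ))⁻¹ • (D i *ᵥ p (m + 1 - j - i)) = 0 :=
        IH (m + 1 - j) (by omega) (Finset.mem_Icc.mpr ⟨by omega, by omega⟩)
      rw [hv0]
      ext a b
      simp [Matrix.vecMulVec_apply]
    rw [hz, add_zero, show m + 1 - 1 = m by omega] at h
    obtain ⟨b, hb⟩ := Function.ne_iff.mp hq
    funext a
    have hab := congrFun (congrFun h a) b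
    simp only [Matrix.vecMulVec_apply, Matrix.zero_apply] at hab
    have ha := (mul_eq_zero.mp hab).resolve_right hb
    simpa using ha
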